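/- arXiv:2404.06192 — 2 statements merged into one kernel-verified Lean document; each statement's English description precedes it below -/
import Mathlib

section
/- In a symmetric monoidal category in which every object X carries a counital comagma structure (δ_X : X → X ⊗ X, ε_X : X → I) such that every morphism is a comagma homomorphism and the structure is uniform (ε_{X⊗Y} = ε_X ⊗ ε_Y, ε_I = id, δ_I = id, and δ_{X⊗Y} = (δ_X ⊗ δ_Y) ≫ (id ⊗ σ_{X,Y} ⊗ id)), the comultiplication δ_X is cocommutative: δ_X ≫ σ_{X,X} = δ_X. -/
open CategoryTheory MonoidalCategory

/-- Auxiliary: the uniform comultiplication on a tensor product, composed with the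
two counit-induced projections, is the identity. -/
lemma comagma_delta_tensor_proj {C : Type*} [Category C] [MonoidalCategory C]
    [SymmetricCategory C]
    (δ : ∀ X : C, X ⟶ X ⊗ X) (ε : ∀ X : C, X ⟶ 𝟙_ C)
    (counit_l : ∀ X : C, δ X ≫ (ε X ⊗ₘ 𝟙 X) ≫ (λ_ X).hom = 𝟙 X)
    (counit_r : ∀ X : C, δ X ≫ (𝟙 X ⊗ₘ ε X) ≫ (ρ_ X).hom = 𝟙 X)
    (X Y : C) :
    ((δ X ⊗ₘ δ Y) ≫
      (α_ X X (Y ⊗ Y)).hom ≫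
      (X ◁ ((α_ X Y Y).inv ≫ ((β_ X Y).hom ▷ Y) ≫ (α_ Y X Y).hom)) ≫
      (α_ X Y (X ⊗ Y)).inv) ≫
      (((𝟙 X ⊗ₘ ε Y) ≫ (ρ_ X).hom) ⊗ₘ ((ε X ⊗ₘ 𝟙 Y) ≫ (λ_ Y).hom)) = 𝟙 (X ⊗ Y) := by
  have h2 := counit_r X
  have h3 := counit_l Y
  simp only [MonoidalCategory.tensorHom_def, id_whiskerRight, MonoidalCategory.whiskerLeft_id,
    Category.comp_id, Category.id_comp] at h2 h3
  simp [MonoidalCategory.tensorHom_def]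
  slice_lhs 5 6 =>
    rw [← MonoidalCategory.whiskerLeft_comp, ← comp_whiskerRight,
      ← BraidedCategory.braiding_naturality_right, braiding_tensorUnit_right]
  simp
  slice_lhs 3 5 =>
    rw [← MonoidalCategory.whiskerLeft_comp, ← MonoidalCategory.whiskerLeft_comp,
      ← MonoidalCategory.whiskerLeft_comp, ← MonoidalCategory.whiskerLeft_comp, h3]
  slice_lhs 3 4 =>
    rw [← MonoidalCategory.whiskerLeft_comp]
  rw [MonoidalCategory.whiskerLeft_id, Category.id_comp,
    ← associator_naturality_middle_assoc, MonoidalCategory.triangle,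
    ← comp_whiskerRight_assoc, ← comp_whiskerRight, Category.assoc, h2, id_whiskerRight]

/-- Refined Fox theorem, cocommutativity part: in a symmetric monoidal category
with a uniform counital comagma structure on every object, such that every
morphism is a comagma homomorphism, every comultiplication is cocommutative. -/
theorem comagma_cocommutative {C : Type*} [Category C] [MonoidalCategory C]
    [SymmetricCategory C]
    (δ : ∀ X : C, X ⟶ X ⊗ X) (ε : ∀ X : C, X ⟶ 𝟙_ C)
    (counit_l : ∀ X : C, δ X ≫ (ε X ⊗ₘ 𝟙 X) ≫ (λ_ X).hom = 𝟙 X)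
    (counit_r : ∀ X : C, δ X ≫ (𝟙 X ⊗ₘ ε X) ≫ (ρ_ X).hom = 𝟙 X)
    (hom_δ : ∀ {X Y : C} (f : X ⟶ Y), f ≫ δ Y = δ X ≫ (f ⊗ₘ f))
    (hom_ε : ∀ {X Y : C} (f : X ⟶ Y), f ≫ ε Y = ε X)
    (unif_ε : ∀ X Y : C, ε (X ⊗ Y) = (ε X ⊗ₘ ε Y) ≫ (λ_ (𝟙_ C)).hom)
    (unif_εI : ε (𝟙_ C) = 𝟙 (𝟙_ C))
    (unif_δI : δ (𝟙_ C) = (λ_ (𝟙_ C)).inv)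
    (unif_δ : ∀ X Y : C, δ (X ⊗ Y) = (δ X ⊗ₘ δ Y) ≫
      (α_ X X (Y ⊗ Y)).hom ≫
      (X ◁ ((α_ X Y Y).inv ≫ ((β_ X Y).hom ▷ Y) ≫ (α_ Y X Y).hom)) ≫
      (α_ X Y (X ⊗ Y)).inv) :
    ∀ X : C, δ X ≫ (β_ X X).hom = δ X := by
  intro X
  set π₁ : X ⊗ X ⟶ X := (𝟙 X ⊗ₘ ε X) ≫ (ρ_ X).hom with hπ₁
  set π₂ : X ⊗ X ⟶ X := (ε X ⊗ₘ 𝟙 X) ≫ (λ_ X).hom with hπ₂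
  have L : δ (X ⊗ X) ≫ (π₁ ⊗ₘ π₂) = 𝟙 (X ⊗ X) := by
    rw [unif_δ, hπ₁, hπ₂]
    exact comagma_delta_tensor_proj δ ε counit_l counit_r X X
  have key : ∀ g : X ⟶ X ⊗ X, g = δ X ≫ ((g ≫ π₁) ⊗ₘ (g ≫ π₂)) := by
    intro g
    calc g = g ≫ δ (X ⊗ X) ≫ (π₁ ⊗ₘ π₂) := by rw [L, Category.comp_id]
    _ = (δ X ≫ (g ⊗ₘ g)) ≫ (π₁ ⊗ₘ π₂) := by rw [← Category.assoc, hom_δ g]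
    _ = δ X ≫ ((g ≫ π₁) ⊗ₘ (g ≫ π₂)) := by
        rw [Category.assoc, tensorHom_comp_tensorHom]
  have p₁ : (δ X ≫ (β_ X X).hom) ≫ π₁ = 𝟙 X := by
    rw [hπ₁]
    simp only [MonoidalCategory.tensorHom_def, id_whiskerRight, Category.id_comp, Category.assoc]
    rw [← BraidedCategory.braiding_naturality_left_assoc, braiding_tensorUnit_left]
    simpa using counit_l X
  have p₂ : (δ X ≫ (β_ X X).hom) ≫ π₂ = 𝟙 X := by
    rw [hπ₂]
    simp only [tensorHom_def', MonoidalCategory.whiskerLeft_id, Category.comp_id,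
      Category.id_comp, Category.assoc]
    rw [← BraidedCategory.braiding_naturality_right_assoc, braiding_tensorUnit_right]
    simpa using counit_r X
  calc δ X ≫ (β_ X X).hom
      = δ X ≫ (((δ X ≫ (β_ X X).hom) ≫ π₁) ⊗ₘ ((δ X ≫ (β_ X X).hom) ≫ π₂)) :=
        key (δ X ≫ (β_ X X).hom)
    _ = δ X := by rw [p₁, p₂, id_tensorHom_id, Category.comp_id]
end

section
/- Under the same hypotheses (uniform natural counital comagma structure on a symmetric monoidal category where all morphisms are comagma homomorphisms), the comultiplication δ_X is coassociative: δ_X ≫ (id_X ⊗ δ_X) = δ_X ≫ (δ_X ⊗ id_X) up to associators. -/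
open CategoryTheory MonoidalCategory

theorem fox_aux {C : Type*} [Category C] [MonoidalCategory C] [SymmetricCategory C]
    (X : C) (e : X ⟶ 𝟙_ C) :
    ((α_ X X (X ⊗ X)).hom ≫
      (X ◁ ((α_ X X X).inv ≫ ((β_ X X).hom ▷ X) ≫ (α_ X X X).hom)) ≫
      (α_ X X (X ⊗ X)).inv) ≫ (((𝟙 X ⊗ₘ e) ≫ (ρ_ X).hom) ⊗ₘ 𝟙 (X ⊗ X))
    = (𝟙 (X ⊗ X) ⊗ₘ ((e ⊗ₘ 𝟙 X) ≫ (λ_ X).hom)) ≫ (α_ X X X).hom := by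
  have hb : (β_ X (𝟙_ C)).hom = (ρ_ X).hom ≫ (λ_ X).inv := by
    rw [← braiding_leftUnitor X]; simp
  have inner : (α_ X X X).inv ≫ ((β_ X X).hom ▷ X) ≫ ((e ▷ X) ▷ X) ≫
      (α_ (𝟙_ C) X X).hom ≫ (λ_ (X ⊗ X)).hom
      = (X ◁ (e ▷ X)) ≫ (X ◁ (λ_ X).hom) := by
    slice_lhs 2 3 => rw [← comp_whiskerRight, ← BraidedCategory.braiding_naturality_right, hb]
    simp
  have h := congrArg (MonoidalCategory.whiskerLeft X) inner
  simp only [MonoidalCategory.whiskerLeft_comp] at h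
  simp [MonoidalCategory.tensorHom_def]
  exact h

set_option maxHeartbeats 1000000 in
/-- Refined Fox theorem, coassociativity part: in a symmetric monoidal category
with a uniform counital comagma structure on every object, such that every
morphism is a comagma homomorphism, every comultiplication is coassociative (up to associators). -/
theorem comagma_coassociative {C : Type*} [Category C] [MonoidalCategory C]
    [SymmetricCategory C]
    (δ : ∀ X : C, X ⟶ X ⊗ X) (ε : ∀ X : C, X ⟶ 𝟙_ C)
    (counit_l : ∀ X : C, δ X ≫ (ε X ⊗ₘ 𝟙 X) ≫ (λ_ X).hom = 𝟙 X)
    (counit_r : ∀ X : C, δ X ≫ (𝟙 X ⊗ₘ ε X) ≫ (ρ_ X).hom = 𝟙 X)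
    (hom_δ : ∀ {X Y : C} (f : X ⟶ Y), f ≫ δ Y = δ X ≫ (f ⊗ₘ f))
    (hom_ε : ∀ {X Y : C} (f : X ⟶ Y), f ≫ ε Y = ε X)
    (unif_ε : ∀ X Y : C, ε (X ⊗ Y) = (ε X ⊗ₘ ε Y) ≫ (λ_ (𝟙_ C)).hom)
    (unif_εI : ε (𝟙_ C) = 𝟙 (𝟙_ C))
    (unif_δI : δ (𝟙_ C) = (λ_ (𝟙_ C)).inv)
    (unif_δ : ∀ X Y : C, δ (X ⊗ Y) = (δ X ⊗ₘ δ Y) ≫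
      (α_ X X (Y ⊗ Y)).hom ≫
      (X ◁ ((α_ X Y Y).inv ≫ ((β_ X Y).hom ▷ Y) ≫ (α_ Y X Y).hom)) ≫
      (α_ X Y (X ⊗ Y)).inv) :
    ∀ X : C, δ X ≫ (𝟙 X ⊗ₘ δ X) = δ X ≫ (δ X ⊗ₘ 𝟙 X) ≫ (α_ X X X).hom := by
  intro X
  have h := hom_δ (δ X)
  rw [unif_δ X X] at h
  have h2 := congrArg
    (fun g => g ≫ (((𝟙 X ⊗ₘ ε X) ≫ (ρ_ X).hom) ⊗ₘ 𝟙 (X ⊗ X))) h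
  have hr : (δ X ⊗ₘ δ X) ≫ (((𝟙 X ⊗ₘ ε X) ≫ (ρ_ X).hom) ⊗ₘ 𝟙 (X ⊗ X))
      = (𝟙 X ⊗ₘ δ X) := by
    rw [tensorHom_comp_tensorHom, Category.comp_id, counit_r]
  have hl : (δ X ⊗ₘ δ X) ≫ (𝟙 (X ⊗ X) ⊗ₘ ((ε X ⊗ₘ 𝟙 X) ≫ (λ_ X).hom))
      = (δ X ⊗ₘ 𝟙 X) := by
    rw [tensorHom_comp_tensorHom, Category.comp_id, counit_l]
  calc δ X ≫ (𝟙 X ⊗ₘ δ X)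
      = δ X ≫ (δ X ⊗ₘ δ X) ≫ (((𝟙 X ⊗ₘ ε X) ≫ (ρ_ X).hom) ⊗ₘ 𝟙 (X ⊗ X)) := by
        rw [hr]
    _ = (δ X ≫ (δ X ⊗ₘ δ X) ≫ (α_ X X (X ⊗ X)).hom ≫
          (X ◁ ((α_ X X X).inv ≫ ((β_ X X).hom ▷ X) ≫ (α_ X X X).hom)) ≫
          (α_ X X (X ⊗ X)).inv) ≫ (((𝟙 X ⊗ₘ ε X) ≫ (ρ_ X).hom) ⊗ₘ 𝟙 (X ⊗ X)) := by
        rw [h2, Category.assoc]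
    _ = δ X ≫ (δ X ⊗ₘ δ X) ≫ ((α_ X X (X ⊗ X)).hom ≫
          (X ◁ ((α_ X X X).inv ≫ ((β_ X X).hom ▷ X) ≫ (α_ X X X).hom)) ≫
          (α_ X X (X ⊗ X)).inv) ≫ (((𝟙 X ⊗ₘ ε X) ≫ (ρ_ X).hom) ⊗ₘ 𝟙 (X ⊗ X)) := by
        simp only [Category.assoc]
    _ = δ X ≫ (δ X ⊗ₘ δ X) ≫ (𝟙 (X ⊗ X) ⊗ₘ ((ε X ⊗ₘ 𝟙 X) ≫ (λ_ X).hom)) ≫ (α_ X X X).hom := by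
        rw [← fox_aux X (ε X)]
    _ = δ X ≫ (δ X ⊗ₘ 𝟙 X) ≫ (α_ X X X).hom := by
        rw [← Category.assoc (δ X ⊗ₘ δ X), hl]
end
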